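/- arXiv:2001.11622 — 6 statements merged into one kernel-verified Lean document; each statement's English description precedes it below -/
import Mathlib

section
/- In Z_p with δ(x) = (x - x^p)/p, the k-th iterate δ^k(p^k) is a p-adic unit, i.e., v_p(δ^k(p^k)) = 0. -/
private lemma aux1 (p : ℕ) [hp : Fact p.Prime] (D : ℤ_[p] → ℤ_[p])
    (hD : ∀ x, (p : ℤ_[p]) * D x = x - x ^ p) :
    ∀ (k : ℕ) (x : ℤ_[p]), ‖x‖ = (p : ℝ) ^ (-(k : ℤ)) → ‖D^[k] x‖ = 1 := by
  have hp1 : (1 : ℝ) < p := by exact_mod_cast hp.1.one_lt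
  have hp0 : (0 : ℝ) < p := lt_trans one_pos hp1
  intro k
  induction k with
  | zero => intro x hx; simpa using hx
  | succ k ih =>
    intro x hx
    have hxlt : ‖x‖ < 1 := by
      rw [hx]
      apply zpow_lt_one_of_neg₀ hp1
      simp; omega
    have hxpos : (0 : ℝ) < ‖x‖ := by rw [hx]; positivity
    have hpow : ‖x ^ p‖ < ‖x‖ := by
      rw [norm_pow]
      calc ‖x‖ ^ p ≤ ‖x‖ ^ 2 := pow_le_pow_of_le_one (le_of_lt hxpos) hxlt.le hp.1.two_le
        _ < ‖x‖ := by nlinarith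
    have hsub : ‖x - x ^ p‖ = ‖x‖ := by
      rw [sub_eq_add_neg, PadicInt.norm_add_eq_max_of_ne, norm_neg, max_eq_left hpow.le]
      rw [norm_neg]; exact ne_of_gt hpow
    have hmul : ‖(p : ℤ_[p]) * D x‖ = ‖x‖ := by rw [hD x]; exact hsub
    have hDx : ‖D x‖ = (p : ℝ) ^ (-(k : ℤ)) := by
      rw [norm_mul, PadicInt.norm_p, hx] at hmul
      have : ‖D x‖ = (p : ℝ) * (p : ℝ) ^ (-((k : ℤ) + 1)) := by
        field_simp at hmul ⊢
        push_cast at hmul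
        linarith [hmul]
      rw [this, show -((k : ℤ) + 1) = -1 + -(k : ℤ) by ring, zpow_add₀ (ne_of_gt hp0)]
      rw [zpow_neg_one]
      field_simp
    have := ih (D x) hDx
    rwa [Function.iterate_succ_apply]

/-- In `ℤ_p` with `δ x = (x - x^p)/p`, the `k`-th iterate `δ^[k] (p^k)` is a
`p`-adic unit, i.e. has valuation `0`. -/
theorem stmt1 (p : ℕ) [Fact p.Prime] (D : ℤ_[p] → ℤ_[p])
    (hD : ∀ x, (p : ℤ_[p]) * D x = x - x ^ p) (k : ℕ) :
    (D^[k] ((p : ℤ_[p]) ^ k)).valuation = 0 := by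
  have h : ‖D^[k] ((p : ℤ_[p]) ^ k)‖ = 1 :=
    aux1 p D hD k _ (PadicInt.norm_p_pow k)
  have hne : D^[k] ((p : ℤ_[p]) ^ k) ≠ 0 := by
    intro h0; rw [h0] at h; simp at h
  have hp1 : (1 : ℝ) < p := by exact_mod_cast (Fact.out : p.Prime).one_lt
  have := PadicInt.norm_eq_zpow_neg_valuation hne
  rw [h] at this
  have : ((p : ℝ) ^ (-((D^[k] ((p : ℤ_[p]) ^ k)).valuation : ℤ))) = (p : ℝ) ^ (0 : ℤ) := by
    rw [← this]; simp
  have hv := zpow_right_injective₀ (by positivity) (ne_of_gt hp1) this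
  omega
end

section
/- Let R be a δ-ring and x, y ∈ R with xy = p^k. Then for every i ≥ 1, δ^i(p^k) lies in the ideal (φ^i(x)·δ^i(y), δ^{i-1}(y), …, δ(y), y). -/
/-- A δ-ring structure at the prime `p` on a commutative ring `R`. -/
structure DeltaRing (p : ℕ) (R : Type*) [CommRing R] where
  δ : R → R
  delta_one : δ 1 = 0
  delta_mul : ∀ a b, δ (a * b) = a ^ p * δ b + b ^ p * δ a + (p : R) * δ a * δ b
  delta_add : ∀ a b, δ (a + b) = δ a + δ b -
    ∑ i ∈ Finset.Ioo 0 p, ((p.choose i / p : ℕ) : R) * a ^ i * b ^ (p - i)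

section Aux

set_option linter.unusedSectionVars false

variable {p : ℕ} [Fact p.Prime] {R : Type*} [CommRing R] (dr : DeltaRing p R)

lemma delta_zero' : dr.δ 0 = 0 := by
  have h := dr.delta_add 0 0
  have hsum : ∑ i ∈ Finset.Ioo 0 p, ((p.choose i / p : ℕ) : R) * (0:R) ^ i * 0 ^ (p - i) = 0 := by
    apply Finset.sum_eq_zero
    intro j hj
    have hj1 := (Finset.mem_Ioo.mp hj).1
    rw [zero_pow (by omega : (j:ℕ) ≠ 0)]
    ring
  rw [hsum] at h
  simpa using h

/-- `J i` : ideal generated by `δ^[j] y` for `j < i`. -/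
def Jid (y : R) (i : ℕ) : Ideal R := Ideal.span ((fun j => dr.δ^[j] y) '' Set.Iio i)

lemma Jid_mono (y : R) {i j : ℕ} (h : i ≤ j) : Jid dr y i ≤ Jid dr y j :=
  Ideal.span_mono (Set.image_mono (fun _ hx => lt_of_lt_of_le hx h))

lemma Jid_mem (y : R) {j i : ℕ} (h : j < i) : dr.δ^[j] y ∈ Jid dr y i :=
  Ideal.subset_span ⟨j, h, rfl⟩

lemma delta_Jid (y : R) (i : ℕ) {z : R} (hz : z ∈ Jid dr y i) :
    dr.δ z ∈ Jid dr y (i + 1) := by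
  have hp : 0 < p := (Fact.out : p.Prime).pos
  have key : z ∈ Jid dr y (i+1) ∧ dr.δ z ∈ Jid dr y (i+1) := by
    refine Submodule.span_induction ?_ ?_ ?_ ?_ hz
    · rintro _ ⟨j, hj, rfl⟩
      exact ⟨Jid_mem dr y (by simpa using Nat.lt_succ_of_lt hj),
        by rw [← Function.iterate_succ_apply' dr.δ j y]
           exact Jid_mem dr y (by simpa using Nat.succ_lt_succ hj)⟩
    · exact ⟨(Jid dr y (i+1)).zero_mem, by rw [delta_zero' dr]; exact (Jid dr y (i+1)).zero_mem⟩
    · rintro a b _ _ ⟨ha1, ha2⟩ ⟨hb1, hb2⟩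
      refine ⟨(Jid dr y (i+1)).add_mem ha1 hb1, ?_⟩
      rw [dr.delta_add a b]
      refine Ideal.sub_mem _ (Ideal.add_mem _ ha2 hb2) (Ideal.sum_mem _ ?_)
      intro j hj
      have hj1 : 1 ≤ j := (Finset.mem_Ioo.mp hj).1
      exact Ideal.mul_mem_right _ _
        (Ideal.mul_mem_left _ _ (Ideal.pow_mem_of_mem _ ha1 j hj1))
    · rintro r z _ ⟨hz1, hz2⟩
      refine ⟨Ideal.mul_mem_left _ _ hz1, ?_⟩
      rw [smul_eq_mul, dr.delta_mul r z]
      refine Ideal.add_mem _ (Ideal.add_mem _ (Ideal.mul_mem_left _ _ hz2) ?_)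
        (Ideal.mul_mem_left _ _ hz2)
      exact Ideal.mul_mem_right _ _ (Ideal.pow_mem_of_mem _ hz1 p hp)
  exact key.2

lemma key_lemma (x y : R) (i : ℕ) (hi : 1 ≤ i) :
    dr.δ^[i] (x * y) - (fun a => a ^ p + (p : R) * dr.δ a)^[i] x * dr.δ^[i] y
      ∈ Jid dr y i := by
  have hp : 0 < p := (Fact.out : p.Prime).pos
  induction i with
  | zero => omega
  | succ n ih =>
    rcases Nat.eq_or_lt_of_le hi with h1 | h1
    · -- base case i = 1
      have hn : n = 0 := by omega
      subst hn
      simp only [zero_add, Function.iterate_one]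
      rw [dr.delta_mul x y]
      have heq : x ^ p * dr.δ y + y ^ p * dr.δ x + (p:R) * dr.δ x * dr.δ y
          - (x ^ p + (p:R) * dr.δ x) * dr.δ y = y ^ p * dr.δ x := by ring
      rw [heq]
      exact Ideal.mul_mem_right _ _
        (Ideal.pow_mem_of_mem _ (Jid_mem dr y (by omega : 0 < 1)) p hp)
    · have hn : 1 ≤ n := by omega
      have ihn := ih hn
      set a := (fun a : R => a ^ p + (p : R) * dr.δ a)^[n] x * dr.δ^[n] y with ha
      set z := dr.δ^[n] (x * y) - a with hzdef
      have hzn : z ∈ Jid dr y n := ihn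
      have hzn1 : z ∈ Jid dr y (n+1) := Jid_mono dr y (Nat.le_succ n) hzn
      have hrw : dr.δ^[n+1] (x * y) = dr.δ (a + z) := by
        rw [Function.iterate_succ_apply']
        congr 1
        rw [hzdef]; ring
      rw [hrw, dr.delta_add a z]
      have hda : dr.δ a = (fun a : R => a ^ p + (p : R) * dr.δ a)^[n+1] x * dr.δ^[n+1] y
          + (dr.δ^[n] y) ^ p * dr.δ ((fun a : R => a ^ p + (p : R) * dr.δ a)^[n] x) := by
        rw [ha, dr.delta_mul,
          Function.iterate_succ_apply' (fun a : R => a ^ p + (p : R) * dr.δ a) n x,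
          Function.iterate_succ_apply' dr.δ n y]
        ring
      rw [hda]
      have goal_eq : (fun a : R => a ^ p + (p : R) * dr.δ a)^[n+1] x * dr.δ^[n+1] y +
          dr.δ^[n] y ^ p * dr.δ ((fun a : R => a ^ p + (p : R) * dr.δ a)^[n] x) + dr.δ z -
          (∑ j ∈ Finset.Ioo 0 p, ((p.choose j / p : ℕ) : R) * a ^ j * z ^ (p - j)) -
          (fun a : R => a ^ p + (p : R) * dr.δ a)^[n+1] x * dr.δ^[n+1] y
          = dr.δ^[n] y ^ p * dr.δ ((fun a : R => a ^ p + (p : R) * dr.δ a)^[n] x) + dr.δ z -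
          (∑ j ∈ Finset.Ioo 0 p, ((p.choose j / p : ℕ) : R) * a ^ j * z ^ (p - j)) := by
        ring
      rw [goal_eq]
      refine Ideal.sub_mem _ (Ideal.add_mem _ ?_ (delta_Jid dr y n hzn)) (Ideal.sum_mem _ ?_)
      · exact Ideal.mul_mem_right _ _
          (Ideal.pow_mem_of_mem _ (Jid_mem dr y (Nat.lt_succ_self n)) p hp)
      · intro j hj
        have hj2 : j < p := (Finset.mem_Ioo.mp hj).2
        exact Ideal.mul_mem_left _ _ (Ideal.pow_mem_of_mem _ hzn1 (p - j) (by omega))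

end Aux

/-- If `x * y = p^k` in a δ-ring, then for every `i ≥ 1`,
`δ^i(p^k) ∈ (φ^i(x) δ^i(y), δ^{i-1}(y), …, δ(y), y)`. -/
theorem stmt4 {p : ℕ} [Fact p.Prime] {R : Type*} [CommRing R] (dr : DeltaRing p R)
    (x y : R) (k : ℕ) (hk : 1 ≤ k) (hxy : x * y = (p : R) ^ k)
    (i : ℕ) (hi : 1 ≤ i) :
    dr.δ^[i] ((p : R) ^ k) ∈
      Ideal.span ({(fun a => a ^ p + (p : R) * dr.δ a)^[i] x * dr.δ^[i] y} ∪
        (fun j => dr.δ^[j] y) '' Set.Iio i) := by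
  have h := key_lemma dr x y i hi
  rw [hxy] at h
  have h1 : (fun a => a ^ p + (p : R) * dr.δ a)^[i] x * dr.δ^[i] y ∈
      Ideal.span ({(fun a => a ^ p + (p : R) * dr.δ a)^[i] x * dr.δ^[i] y} ∪
        (fun j => dr.δ^[j] y) '' Set.Iio i) :=
    Ideal.subset_span (Set.mem_union_left _ rfl)
  have h2 : dr.δ^[i] ((p : R) ^ k) - (fun a => a ^ p + (p : R) * dr.δ a)^[i] x * dr.δ^[i] y ∈
      Ideal.span ({(fun a => a ^ p + (p : R) * dr.δ a)^[i] x * dr.δ^[i] y} ∪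
        (fun j => dr.δ^[j] y) '' Set.Iio i) :=
    Ideal.span_mono (Set.subset_union_right) h
  have := Ideal.add_mem _ h1 h2
  simpa using this
end

section
/- Let R be a δ-ring which is (p, x)-adically complete, and suppose xy = p^k for some x, y ∈ R and k ≥ 1. Then the elements y, δ(y), …, δ^{k-1}(y) generate the unit ideal of R (i.e., y is weakly (k-1)-distinguished). -/
namespace DeltaAux

/-- the δ-map on ℤ -/
def dZ (p : ℕ) (n : ℤ) : ℤ := (n - n ^ p) / p

variable {p : ℕ} [hp : Fact p.Prime] {R : Type*} [CommRing R]

lemma dZ_spec (n : ℤ) : (p : ℤ) * dZ p n = n - n ^ p := by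
  have h : (p : ℤ) ∣ n - n ^ p := by
    have h1 : ((n : ZMod p)) ^ p = (n : ZMod p) := ZMod.pow_card _
    have h2 : ((n - n ^ p : ℤ) : ZMod p) = 0 := by push_cast [h1]; ring
    exact (ZMod.intCast_zmod_eq_zero_iff_dvd _ _).mp h2
  exact Int.mul_ediv_cancel' h

lemma choose_div_mul (i : ℕ) (hi : i ∈ Finset.Ioo 0 p) :
    (p : ℤ) * ((p.choose i / p : ℕ) : ℤ) = (p.choose i : ℤ) := by
  simp only [Finset.mem_Ioo] at hi
  have hd : p ∣ p.choose i := hp.out.dvd_choose_self (by omega) hi.2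
  exact_mod_cast congrArg (Nat.cast (R := ℤ)) (Nat.mul_div_cancel' hd)

lemma dZ_add_one (n : ℤ) :
    dZ p (n + 1) = dZ p n - ∑ i ∈ Finset.Ioo 0 p, ((p.choose i / p : ℕ) : ℤ) * n ^ i := by
  have hp0 : (p : ℤ) ≠ 0 := by exact_mod_cast hp.out.ne_zero
  apply mul_left_cancel₀ hp0
  rw [dZ_spec, mul_sub, dZ_spec, Finset.mul_sum]
  have hexp : (n + 1) ^ p = n ^ p + 1 + ∑ i ∈ Finset.Ioo 0 p, n ^ i * (p.choose i : ℤ) := by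
    rw [add_pow]
    have hset : Finset.range (p + 1) = insert 0 (insert p (Finset.Ioo 0 p)) := by
      ext i
      simp only [Finset.mem_range, Finset.mem_insert, Finset.mem_Ioo]
      omega
    have h0 : (0 : ℕ) ∉ insert p (Finset.Ioo 0 p) := by
      simp only [Finset.mem_insert, Finset.mem_Ioo]
      have := hp.out.one_lt; omega
    have hpnot : p ∉ Finset.Ioo 0 p := by simp
    rw [hset, Finset.sum_insert h0, Finset.sum_insert hpnot]
    simp only [pow_zero, one_pow, Nat.choose_zero_right, Nat.choose_self, Nat.sub_self,
      Nat.cast_one, one_mul, mul_one]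
    ring
  have hsum : ∀ i ∈ Finset.Ioo 0 p,
      (p : ℤ) * (((p.choose i / p : ℕ) : ℤ) * n ^ i) = n ^ i * (p.choose i : ℤ) := by
    intro i hi; rw [← mul_assoc, choose_div_mul i hi]; ring
  rw [Finset.sum_congr rfl hsum, hexp]
  ring

lemma cast_sum_aux (n : ℤ) :
    ((∑ i ∈ Finset.Ioo 0 p, ((p.choose i / p : ℕ) : ℤ) * n ^ i : ℤ) : R)
      = ∑ i ∈ Finset.Ioo 0 p, ((p.choose i / p : ℕ) : R) * ((n : ℤ) : R) ^ i := by
  rw [Int.cast_sum]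
  exact Finset.sum_congr rfl fun i hi => by rw [Int.cast_mul, Int.cast_pow, Int.cast_natCast]

variable (dr : DeltaRing p R)

lemma delta_zero : dr.δ 0 = 0 := by
  have h := dr.delta_add 0 0
  have hsum : ∑ i ∈ Finset.Ioo 0 p, ((p.choose i / p : ℕ) : R) * (0:R) ^ i * (0:R) ^ (p - i)
      = 0 := by
    apply Finset.sum_eq_zero
    intro i hi
    simp only [Finset.mem_Ioo] at hi
    rw [zero_pow (by omega), mul_zero, zero_mul]
  rw [add_zero, hsum, sub_zero] at h
  have h2 : dr.δ 0 + 0 = dr.δ 0 + dr.δ 0 := by rw [add_zero]; exact h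
  exact (add_left_cancel h2).symm

lemma delta_add_one (a : R) :
    dr.δ (a + 1) = dr.δ a - ∑ i ∈ Finset.Ioo 0 p, ((p.choose i / p : ℕ) : R) * a ^ i := by
  have h := dr.delta_add a 1
  rw [dr.delta_one, add_zero] at h
  rw [h]
  congr 1
  exact Finset.sum_congr rfl fun i hi => by rw [one_pow, mul_one]

lemma delta_intCast (n : ℤ) : dr.δ ((n : ℤ) : R) = ((dZ p n : ℤ) : R) := by
  induction n using Int.induction_on with
  | zero =>
      have h0 : dZ p 0 = 0 := by
        have hp0 : (p : ℤ) ≠ 0 := by exact_mod_cast hp.out.ne_zero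
        apply mul_left_cancel₀ hp0
        rw [dZ_spec, zero_pow hp.out.ne_zero]
        ring
      simp [delta_zero dr, h0]
  | succ n ih =>
      have hc : (((n : ℤ) + 1 : ℤ) : R) = ((n : ℤ) : R) + 1 := by push_cast; ring
      rw [hc, delta_add_one dr, ih, dZ_add_one, Int.cast_sub, cast_sum_aux]
  | pred n ih =>
      set m : ℤ := -(n : ℤ) - 1 with hm
      have hmr : ((m + 1 : ℤ) : R) = (m : R) + 1 := by push_cast; ring
      have h1 : dr.δ ((m + 1 : ℤ) : R) = ((dZ p (m + 1) : ℤ) : R) := by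
        have he : m + 1 = -(n : ℤ) := by omega
        rw [he]; exact ih
      rw [hmr, delta_add_one dr] at h1
      have h2 : dr.δ ((m : ℤ) : R) = ((dZ p (m + 1) : ℤ) : R)
          + ∑ i ∈ Finset.Ioo 0 p, ((p.choose i / p : ℕ) : R) * ((m : ℤ) : R) ^ i := by
        rw [← h1]; ring
      have h3 : dZ p m = dZ p (m + 1)
          + ∑ i ∈ Finset.Ioo 0 p, ((p.choose i / p : ℕ) : ℤ) * m ^ i := by
        rw [dZ_add_one]; ring
      rw [h2, h3, Int.cast_add, cast_sum_aux]

lemma delta_iterate_intCast (j : ℕ) (n : ℤ) :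
    dr.δ^[j] ((n : ℤ) : R) = (((dZ p)^[j] n : ℤ) : R) := by
  induction j generalizing n with
  | zero => simp
  | succ j ih =>
      rw [Function.iterate_succ_apply, Function.iterate_succ_apply,
        delta_intCast dr, ih]

lemma dZ_iterate_pow (k : ℕ) (j : ℕ) (hj : j ≤ k) :
    ∃ u : ℤ, ¬ (p : ℤ) ∣ u ∧ (dZ p)^[j] ((p : ℤ) ^ k) = (p : ℤ) ^ (k - j) * u := by
  induction j with
  | zero =>
      refine ⟨1, ?_, by simp⟩
      intro h
      have h1 : (p : ℤ) ∣ ((1 : ℕ) : ℤ) := by exact_mod_cast h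
      have h2 := Int.ofNat_dvd.mp h1
      have h3 := Nat.le_of_dvd one_pos h2
      have := hp.out.one_lt
      omega
  | succ j ih =>
      obtain ⟨u, hu, heq⟩ := ih (by omega)
      set m : ℕ := k - j with hmd
      have hm1 : 1 ≤ m := by omega
      have hp0 : (p : ℤ) ≠ 0 := by exact_mod_cast hp.out.ne_zero
      have hmp : m * p = m + m * (p - 1) := by
        obtain ⟨q, hq⟩ : ∃ q, p = q + 1 := ⟨p - 1, by have := hp.out.pos; omega⟩
        subst hq
        simp only [Nat.add_sub_cancel]
        ring
      have hpm : (p : ℤ) ^ m = (p : ℤ) * (p : ℤ) ^ (m - 1) := by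
        conv_lhs => rw [show m = (m - 1) + 1 by omega]
        rw [pow_succ']
      set u' : ℤ := u - (p : ℤ) ^ (m * (p - 1)) * u ^ p with hu'
      have hstep : dZ p ((p : ℤ) ^ m * u) = (p : ℤ) ^ (m - 1) * u' := by
        apply mul_left_cancel₀ hp0
        rw [dZ_spec]
        have e2 : ((p : ℤ) ^ m * u) ^ p = (p:ℤ) ^ m * ((p:ℤ) ^ (m * (p-1)) * u ^ p) := by
          rw [mul_pow, ← pow_mul, hmp, pow_add]
          ring
        rw [e2, hu', hpm]
        ring
      have hu'2 : ¬ (p : ℤ) ∣ u' := by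
        intro h
        apply hu
        have hne : m * (p - 1) ≠ 0 := by
          have := hp.out.one_lt
          intro h0
          rcases Nat.mul_eq_zero.mp h0 with h1 | h1 <;> omega
        have hdvd : (p : ℤ) ∣ (p : ℤ) ^ (m * (p - 1)) * u ^ p :=
          Dvd.dvd.mul_right (dvd_pow_self _ hne) _
        have h2 : (p : ℤ) ∣ u' + (p : ℤ) ^ (m * (p - 1)) * u ^ p := dvd_add h hdvd
        simpa [hu'] using h2
      refine ⟨u', hu'2, ?_⟩
      have he : k - (j + 1) = m - 1 := by omega
      rw [Function.iterate_succ_apply', heq, hstep, he]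

end DeltaAux

namespace DeltaAux
variable {p : ℕ} [hp : Fact p.Prime] {R : Type*} [CommRing R] (dr : DeltaRing p R)

lemma delta_mem_span (S : Set R) {c : R} (hc : c ∈ Ideal.span S) :
    dr.δ c ∈ Ideal.span (S ∪ dr.δ '' S) := by
  refine Submodule.span_induction ?_ ?_ ?_ ?_ hc
  · intro s hs
    exact Ideal.subset_span (Or.inr ⟨s, hs, rfl⟩)
  · rw [delta_zero dr]; exact Ideal.zero_mem _
  · intro a b ha hb iha ihb
    rw [dr.delta_add]
    refine Submodule.sub_mem _ (Submodule.add_mem _ iha ihb) ?_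
    refine Ideal.sum_mem _ fun i hi => ?_
    simp only [Finset.mem_Ioo] at hi
    have haS : a ∈ Ideal.span (S ∪ dr.δ '' S) :=
      Ideal.span_mono Set.subset_union_left ha
    have hpow : a ^ i ∈ Ideal.span (S ∪ dr.δ '' S) :=
      Ideal.pow_mem_of_mem _ haS i hi.1
    exact Ideal.mul_mem_right _ _ (Ideal.mul_mem_left _ _ hpow)
  · intro r a ha iha
    rw [smul_eq_mul, dr.delta_mul]
    have haS : a ∈ Ideal.span (S ∪ dr.δ '' S) :=
      Ideal.span_mono Set.subset_union_left ha
    refine Ideal.add_mem _ (Ideal.add_mem _ ?_ ?_) ?_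
    · exact Ideal.mul_mem_left _ _ iha
    · exact Ideal.mul_mem_right _ _ (Ideal.pow_mem_of_mem _ haS p hp.out.pos)
    · exact Ideal.mul_mem_left _ _ iha

/-- Frobenius lift. -/
def phi (dr : DeltaRing p R) : R → R := fun a => a ^ p + (p : R) * dr.δ a

lemma phi_iterate_mem (x : R) (j : ℕ) :
    (phi dr)^[j] x ∈ Ideal.span {(p : R), x} := by
  induction j with
  | zero => exact Ideal.subset_span (by simp)
  | succ j ih =>
      rw [Function.iterate_succ_apply']
      refine Ideal.add_mem _ ?_ ?_
      · exact Ideal.pow_mem_of_mem _ ih p hp.out.pos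
      · exact Ideal.mul_mem_right _ _ (Ideal.subset_span (by simp))

lemma image_union_subset (y : R) (j : ℕ) :
    ((fun i => dr.δ^[i] y) '' Set.Iio j ∪ dr.δ '' ((fun i => dr.δ^[i] y) '' Set.Iio j))
      ⊆ (fun i => dr.δ^[i] y) '' Set.Iio (j + 1) := by
  rintro z (⟨i, hi, rfl⟩ | ⟨w, ⟨i, hi, rfl⟩, rfl⟩)
  · exact ⟨i, by simp only [Set.mem_Iio] at hi ⊢; omega, rfl⟩
  · exact ⟨i + 1, by simp only [Set.mem_Iio] at hi ⊢; omega,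
      Function.iterate_succ_apply' dr.δ i y⟩

lemma main_step (x y : R) (j : ℕ) (hj : 1 ≤ j) :
    dr.δ^[j] (x * y) - (phi dr)^[j] x * dr.δ^[j] y ∈
      Ideal.span ((fun i => dr.δ^[i] y) '' Set.Iio j) := by
  induction j with
  | zero => omega
  | succ j ih =>
    rcases Nat.eq_zero_or_pos j with hj0 | hj1
    · subst hj0
      have hy : y ∈ Ideal.span ((fun i => dr.δ^[i] y) '' Set.Iio 1) :=
        Ideal.subset_span ⟨0, by simp, by simp⟩
      have he : dr.δ^[1] (x * y) - (phi dr)^[1] x * dr.δ^[1] y = y ^ p * dr.δ x := by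
        simp only [Function.iterate_one, dr.delta_mul, phi]
        ring
      rw [he]
      exact Ideal.mul_mem_right _ _ (Ideal.pow_mem_of_mem _ hy p hp.out.pos)
    · have ihj := ih hj1
      set c : R := (phi dr)^[j] x with hc
      set g : R := dr.δ^[j] y with hg
      set i₀ : R := dr.δ^[j] (x * y) - c * g with hi₀
      set I' : Ideal R := Ideal.span ((fun i => dr.δ^[i] y) '' Set.Iio (j + 1)) with hI'
      have hIsub : Ideal.span ((fun i => dr.δ^[i] y) '' Set.Iio j) ≤ I' :=
        Ideal.span_mono (Set.image_mono (Set.Iio_subset_Iio (by omega)))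
      have hi₀mem : i₀ ∈ I' := hIsub ihj
      have hsplit : dr.δ^[j] (x * y) = c * g + i₀ := by rw [hi₀]; ring
      have hgoal : dr.δ^[j + 1] (x * y) - (phi dr)^[j + 1] x * dr.δ^[j + 1] y
          = g ^ p * dr.δ c + dr.δ i₀
            - ∑ i ∈ Finset.Ioo 0 p, ((p.choose i / p : ℕ) : R) * (c * g) ^ i * i₀ ^ (p - i) := by
        rw [Function.iterate_succ_apply' dr.δ j (x * y), hsplit, dr.delta_add, dr.delta_mul,
          Function.iterate_succ_apply' (phi dr) j x, Function.iterate_succ_apply' dr.δ j y]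
        simp only [phi, ← hc, ← hg]
        ring
      rw [hgoal]
      refine Submodule.sub_mem _ (Ideal.add_mem _ ?_ ?_) ?_
      · have hgmem : g ∈ I' := Ideal.subset_span ⟨j, by simp, rfl⟩
        exact Ideal.mul_mem_right _ _ (Ideal.pow_mem_of_mem _ hgmem p hp.out.pos)
      · have h1 := delta_mem_span dr _ ihj
        exact Ideal.span_mono (image_union_subset dr y j) h1
      · refine Ideal.sum_mem _ fun i hi => ?_
        simp only [Finset.mem_Ioo] at hi
        have hpow : i₀ ^ (p - i) ∈ I' :=
          Ideal.pow_mem_of_mem _ hi₀mem (p - i) (by omega)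
        exact Ideal.mul_mem_left _ _ hpow

end DeltaAux

/-- If `R` is a `(p,x)`-adically complete δ-ring and `x * y = p^k` with `k ≥ 1`,
then `y, δ(y), …, δ^{k-1}(y)` generate the unit ideal (`y` is weakly
`(k-1)`-distinguished). -/
theorem stmt5 {p : ℕ} [Fact p.Prime] {R : Type*} [CommRing R] (dr : DeltaRing p R)
    (x y : R) (k : ℕ) (hk : 1 ≤ k) (hxy : x * y = (p : R) ^ k)
    (hc : IsAdicComplete (Ideal.span {(p : R), x}) R) :
    Ideal.span ((fun j => dr.δ^[j] y) '' Set.Iio k) = ⊤ := by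
  haveI := hc
  haveI hp : Fact p.Prime := ‹_›
  obtain ⟨N, hN, hNeq⟩ := DeltaAux.dZ_iterate_pow (p := p) k k le_rfl
  have hcast : dr.δ^[k] ((p : R) ^ k) = ((N : ℤ) : R) := by
    have h1 : ((p : R) ^ k) = (((p : ℤ) ^ k : ℤ) : R) := by push_cast; ring
    rw [h1, DeltaAux.delta_iterate_intCast dr k, hNeq]
    simp
  have hmain := DeltaAux.main_step dr x y k hk
  rw [hxy, hcast] at hmain
  set z : R := (DeltaAux.phi dr)^[k] x * dr.δ^[k] y with hz
  have hJ : Ideal.span {(p : R), x} ≤ Ideal.jacobson ⊥ :=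
    IsAdicComplete.le_jacobson_bot _
  have hzJ : z ∈ Ideal.jacobson (⊥ : Ideal R) :=
    Ideal.mul_mem_right _ _ (hJ (DeltaAux.phi_iterate_mem dr x k))
  have hpJ : (p : R) ∈ Ideal.jacobson (⊥ : Ideal R) :=
    hJ (Ideal.subset_span (by simp))
  have hcop : IsCoprime (p : ℤ) N :=
    (Prime.coprime_iff_not_dvd (Nat.prime_iff_prime_int.mp hp.out)).mpr hN
  obtain ⟨a, b, hab⟩ := hcop
  have hw : (b : R) * (((N : ℤ) : R) - z) = 1 - ((a : R) * (p : R) + (b : R) * z) := by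
    have h2 := congrArg (fun t : ℤ => (t : R)) hab
    push_cast at h2
    linear_combination h2
  have hmem : (a : R) * (p : R) + (b : R) * z ∈ Ideal.jacobson (⊥ : Ideal R) :=
    Ideal.add_mem _ (Ideal.mul_mem_left _ _ hpJ) (Ideal.mul_mem_left _ _ hzJ)
  have hunit1 : IsUnit (1 - ((a : R) * (p : R) + (b : R) * z)) := by
    have h3 := Ideal.mem_jacobson_bot.mp hmem (-1)
    have h4 : ((a : R) * (p : R) + (b : R) * z) * (-1) + 1
        = 1 - ((a : R) * (p : R) + (b : R) * z) := by ring
    rwa [h4] at h3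
  have hunit : IsUnit (((N : ℤ) : R) - z) := by
    refine isUnit_of_mul_isUnit_right (y := ((N : ℤ) : R) - z) (x := (b : R)) ?_
    rw [hw]; exact hunit1
  exact Ideal.eq_top_of_isUnit_mem _ hmain hunit
end

section
/- Let R be a δ-ring which is (p, x)-adically complete with xy = p^k for some y ∈ R and k ≥ 1. Then x is p-adically nilpotent: the p-adic completion of R[1/x] is the zero ring. -/
set_option linter.unusedSectionVars false

namespace Stmt6Aux

lemma add_pow_split {A : Type*} [CommRing A] (hp : p.Prime) (a b : A) :
    (a + b) ^ p = a ^ p + b ^ p +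
      ∑ i ∈ Finset.Ioo 0 p, (p.choose i : A) * a ^ i * b ^ (p - i) := by
  have hr : Finset.range p = insert 0 (Finset.Ioo 0 p) := by
    ext i
    simp only [Finset.mem_range, Finset.mem_insert, Finset.mem_Ioo]
    have := hp.pos; omega
  rw [add_pow, Finset.sum_range_succ, hr, Finset.sum_insert (by simp)]
  simp only [pow_zero, Nat.sub_zero, one_mul, Nat.choose_zero_right, Nat.cast_one, mul_one,
    Nat.choose_self, Nat.sub_self]
  rw [Finset.sum_congr rfl (fun i hi => ?_)]
  · ring
  · ring

lemma choose_p_mul {A : Type*} [CommRing A] (hp : p.Prime) {i : ℕ} (hi : i ∈ Finset.Ioo 0 p) :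
    (p : A) * ((p.choose i / p : ℕ) : A) = (p.choose i : A) := by
  simp only [Finset.mem_Ioo] at hi
  have hd : p ∣ p.choose i := hp.dvd_choose_self (by omega) hi.2
  rw [← Nat.cast_mul, Nat.mul_div_cancel' hd]

variable [Fact p.Prime] {R : Type*} [CommRing R] (dr : DeltaRing p R)

lemma delta_zero : dr.δ 0 = 0 := by
  have h := dr.delta_add 0 0
  have hs : ∑ i ∈ Finset.Ioo 0 p, ((p.choose i / p : ℕ) : R) * (0:R) ^ i * (0:R) ^ (p - i) = 0 := by
    apply Finset.sum_eq_zero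
    intro i hi
    simp only [Finset.mem_Ioo] at hi
    rw [zero_pow (by omega)]
    ring
  rw [add_zero, hs, sub_zero] at h
  have : dr.δ 0 - dr.δ 0 = dr.δ 0 + dr.δ 0 - dr.δ 0 := by rw [← h]
  simpa using this.symm

/-- Frobenius lift -/
def phi : R →+* R where
  toFun a := a ^ p + (p : R) * dr.δ a
  map_one' := by simp [dr.delta_one]
  map_mul' a b := by
    show (a*b)^p + (p:R) * dr.δ (a*b) = _
    rw [dr.delta_mul]
    ring
  map_zero' := by
    show (0:R)^p + (p:R) * dr.δ 0 = 0
    rw [delta_zero dr, zero_pow (Fact.out : p.Prime).ne_zero]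
    ring
  map_add' a b := by
    have hp : p.Prime := Fact.out
    show (a+b)^p + (p:R) * dr.δ (a+b) = (a^p + (p:R)*dr.δ a) + (b^p + (p:R)*dr.δ b)
    rw [dr.delta_add, add_pow_split hp]
    rw [mul_sub, Finset.mul_sum]
    rw [Finset.sum_congr rfl (fun i hi => ?_)]
    · ring
    · rw [← mul_assoc, ← mul_assoc, choose_p_mul hp hi]

lemma phi_def (a : R) : phi dr a = a ^ p + (p : R) * dr.δ a := rfl

lemma delta_mul' (a b : R) : dr.δ (a * b) = phi dr a * dr.δ b + b ^ p * dr.δ a := by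
  rw [dr.delta_mul, phi_def]; ring


/-- Fermat: p ∣ n^p - n over ℤ -/
lemma int_dvd_pow_sub (n : ℤ) : (p : ℤ) ∣ n ^ p - n := by
  have hp : p.Prime := Fact.out
  have : ((n ^ p - n : ℤ) : ZMod p) = 0 := by
    push_cast
    rw [ZMod.pow_card]
    ring
  exact (ZMod.intCast_zmod_eq_zero_iff_dvd _ _).mp this

/-- integer value of δ on naturals -/
noncomputable def Dint (n : ℕ) : ℤ := ((n : ℤ) - (n : ℤ) ^ p) / (p : ℤ)

lemma p_mul_Dint (n : ℕ) : (p : ℤ) * Dint (p := p) n = (n : ℤ) - (n : ℤ) ^ p := by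
  have h : (p : ℤ) ∣ ((n : ℤ) - (n : ℤ) ^ p) := dvd_sub_comm.mp (int_dvd_pow_sub (n : ℤ))
  rw [Dint, Int.mul_ediv_cancel' h]

lemma delta_natCast (n : ℕ) : dr.δ ((n : ℕ) : R) = ((Dint (p := p) n : ℤ) : R) := by
  have hp : p.Prime := Fact.out
  have hpz : (p : ℤ) ≠ 0 := by exact_mod_cast hp.ne_zero
  induction n with
  | zero =>
      simp only [Nat.cast_zero]
      rw [delta_zero dr]
      have hp' : p ≠ 0 := hp.ne_zero
      have : Dint (p := p) 0 = 0 := by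
        simp [Dint, zero_pow hp']
      rw [this]; simp
  | succ n ih =>
      have hstep : dr.δ ((n : R) + 1) = dr.δ (n : R) -
          ∑ i ∈ Finset.Ioo 0 p, ((p.choose i / p : ℕ) : R) * (n : R) ^ i := by
        rw [dr.delta_add, dr.delta_one]
        rw [Finset.sum_congr rfl (fun i hi => by rw [one_pow, mul_one] : ∀ i ∈ Finset.Ioo 0 p, _)]
        ring
      have hcast : ∑ i ∈ Finset.Ioo 0 p, ((p.choose i / p : ℕ) : R) * (n : R) ^ i
          = (((∑ i ∈ Finset.Ioo 0 p, ((p.choose i / p : ℕ) : ℤ) * (n : ℤ) ^ i) : ℤ) : R) := by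
        simp only [Int.cast_sum, Int.cast_mul, Int.cast_pow, Int.cast_natCast]
      have hint : Dint (p := p) (n + 1)
          = Dint (p := p) n - ∑ i ∈ Finset.Ioo 0 p, ((p.choose i / p : ℕ) : ℤ) * (n : ℤ) ^ i := by
        apply mul_left_cancel₀ hpz
        rw [p_mul_Dint, mul_sub, p_mul_Dint, Finset.mul_sum]
        have hsum : ∑ i ∈ Finset.Ioo 0 p, (p:ℤ) * (((p.choose i / p : ℕ) : ℤ) * (n : ℤ) ^ i)
            = ∑ i ∈ Finset.Ioo 0 p, ((p.choose i : ℤ)) * (n : ℤ) ^ i := by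
          refine Finset.sum_congr rfl (fun i hi => ?_)
          rw [← mul_assoc, choose_p_mul hp hi]
        rw [hsum]
        have hb := add_pow_split (p := p) hp (n : ℤ) 1
        simp only [one_pow, mul_one] at hb
        push_cast
        push_cast at hb
        linear_combination -hb
      rw [Nat.cast_succ, hstep, ih, hcast, hint, Int.cast_sub]

lemma delta_p : dr.δ ((p : ℕ) : R) = 1 - (p : R) ^ (p - 1) := by
  have hp : p.Prime := Fact.out
  have hpz : (p : ℤ) ≠ 0 := by exact_mod_cast hp.ne_zero
  have h2 : 2 ≤ p := hp.two_le
  have hint : Dint (p := p) p = 1 - (p : ℤ) ^ (p - 1) := by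
    apply mul_left_cancel₀ hpz
    rw [p_mul_Dint]
    have : (p : ℤ) ^ p = (p : ℤ) * (p : ℤ) ^ (p - 1) := by
      rw [← pow_succ']
      congr 1
      omega
    rw [this]
    ring
  rw [delta_natCast, hint]
  push_cast
  ring


lemma phi_natCast (n : ℕ) : phi dr ((n : ℕ) : R) = ((n : ℕ) : R) := map_natCast (phi dr) n

/-- δ(p^m) = p^(m-1) * (1 + p e) -/
lemma delta_p_pow : ∀ m : ℕ, 1 ≤ m → ∃ e : R, dr.δ ((p : R) ^ m) = (p : R) ^ (m - 1) * (1 + (p : R) * e) := by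
  have hp : p.Prime := Fact.out
  have h2 : 2 ≤ p := hp.two_le
  intro m hm
  induction m with
  | zero => omega
  | succ m ih =>
      rcases Nat.eq_or_lt_of_le hm with h1 | h1
      · -- m + 1 = 1
        have hm0 : m = 0 := by omega
        subst hm0
        refine ⟨-(p : R) ^ (p - 2), ?_⟩
        rw [pow_one, delta_p]
        have : (p : R) ^ (p - 1) = (p : R) * (p : R) ^ (p - 2) := by
          rw [← pow_succ']
          congr 1
          omega
        rw [this]
        ring
      · have hm1 : 1 ≤ m := by omega
        obtain ⟨e, he⟩ := ih hm1
        have hmul : ((p : R)) ^ (m + 1) = ((p : ℕ) : R) * (p : R) ^ m := by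
          rw [pow_succ']
        have hδ : dr.δ ((p : R) ^ (m + 1))
            = (p : R) * dr.δ ((p : R) ^ m) + ((p : R) ^ m) ^ p * dr.δ ((p : ℕ) : R) := by
          rw [hmul, delta_mul', phi_natCast]
        rw [hδ, he, delta_p]
        have hmm : m - 1 + 1 = m := by omega
        have hppow : ((p : R) ^ m) ^ p = (p : R) ^ (m + 1) * (p : R) ^ (m * p - m - 1) := by
          rw [← pow_mul, ← pow_add]
          congr 1
          have : 2 * m ≤ m * p := by nlinarith
          omega
        refine ⟨e + (p:R) ^ (m * p - m - 1) * (1 - (p:R) ^ (p-1)), ?_⟩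
        rw [hppow]
        have h1' : (p : R) * ((p:R) ^ (m-1) * (1 + (p:R)*e)) = (p:R) ^ m * (1 + (p:R)*e) := by
          rw [← mul_assoc, ← pow_succ', hmm]
        rw [h1']
        have h2' : (p:R) ^ (m+1) = (p:R) ^ m * (p : R) := by rw [pow_succ]
        rw [h2']
        have hsub : m + 1 - 1 = m := by omega
        rw [hsub]
        ring


section Units
variable {x : R}

lemma isUnit_add_mem (hc : IsAdicComplete (Ideal.span {(p : R), x}) R)
    {u z : R} (hu : IsUnit u) (hz : z ∈ Ideal.span {(p : R), x}) : IsUnit (u + z) := by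
  haveI := hc
  have hjac : Ideal.span {(p : R), x} ≤ (⊥ : Ideal R).jacobson :=
    IsAdicComplete.le_jacobson_bot _
  obtain ⟨U, rfl⟩ := hu
  have h1 : IsUnit (z * (↑U⁻¹ : R) + 1) := Ideal.mem_jacobson_bot.mp (hjac hz) _
  have : (U : R) + z = (z * (↑U⁻¹ : R) + 1) * U := by
    have := U.inv_mul
    rw [add_mul, mul_assoc, this]
    ring
  rw [this]
  exact h1.mul U.isUnit

lemma p_mem_span : ((p : ℕ) : R) ∈ Ideal.span {(p : R), x} :=
  Ideal.subset_span (Set.mem_insert _ _)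

lemma x_mem_span : x ∈ Ideal.span {(p : R), x} :=
  Ideal.subset_span (Set.mem_insert_of_mem _ rfl)

lemma isUnit_add_p_mul (hc : IsAdicComplete (Ideal.span {(p : R), x}) R)
    {u : R} (hu : IsUnit u) (a : R) : IsUnit (u + (p : R) * a) :=
  isUnit_add_mem hc hu (Ideal.mul_mem_right _ _ (p_mem_span))

end Units

section Main
variable (x y : R) (k : ℕ)

/-- v-chain: δ^[j] (x*y) = p^(k-j) * unit -/
lemma v_chain (hk : 1 ≤ k) (hxy : x * y = (p : R) ^ k)
    (hc : IsAdicComplete (Ideal.span {(p : R), x}) R) :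
    ∀ j : ℕ, j ≤ k → ∃ v : R, IsUnit v ∧ (dr.δ)^[j] (x * y) = (p : R) ^ (k - j) * v := by
  intro j
  induction j with
  | zero =>
      intro _
      exact ⟨1, isUnit_one, by simp [hxy]⟩
  | succ j ih =>
      intro hj
      obtain ⟨v, hv, hev⟩ := ih (by omega)
      have hkj : 1 ≤ k - j := by omega
      obtain ⟨e, hee⟩ := delta_p_pow dr (k - j) hkj
      refine ⟨v ^ p * (1 + (p:R) * e) + (p : R) * dr.δ v, ?_, ?_⟩
      · exact isUnit_add_p_mul hc ((hv.pow p).mul (isUnit_add_p_mul hc isUnit_one e)) _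
      · rw [Function.iterate_succ_apply', hev]
        have hcast : (p : R) ^ (k - j) = (((p : ℕ) : R)) ^ (k-j) := by norm_num
        rw [delta_mul']
        have hphi : phi dr ((p:R) ^ (k-j)) = (p : R) ^ (k - j) := by
          have : ((p:R) ^ (k-j)) = (((p^(k-j) : ℕ)) : R) := by push_cast; ring
          rw [this, map_natCast]
        rw [hphi, hee]
        have h1 : (p:R) ^ (k - j) = (p:R) ^ (k - (j+1)) * (p : R) := by
          rw [← pow_succ]
          congr 1
          omega
        rw [h1]
        have h2 : k - j - 1 = k - (j+1) := by omega
        rw [h2]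
        ring
end Main

section TnDef
variable (x : R)

/-- membership in the multiplicative set `x^N + p*c` -/
def IsM (w : R) : Prop := ∃ (N : ℕ) (c : R), w = x ^ N + (p : R) * c

/-- the chain of torsion ideals -/
def Tn : ℕ → R → Prop
  | 0, _ => True
  | (i+1), a => ∃ w t, IsM (p := p) x w ∧ Tn i t ∧ w * a = (p : R) * t

lemma IsM_mul {w w' : R} (h : IsM (p := p) x w) (h' : IsM (p := p) x w') :
    IsM (p := p) x (w * w') := by
  obtain ⟨N, c, rfl⟩ := h
  obtain ⟨N', c', rfl⟩ := h'
  exact ⟨N + N', c * x ^ N' + c' * x ^ N + (p:R) * (c * c'), by rw [pow_add]; ring⟩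

lemma IsM_one : IsM (p := p) x 1 := ⟨0, 0, by simp⟩

lemma Tn_zero : ∀ i, Tn (p := p) x i 0
  | 0 => trivial
  | (i+1) => ⟨1, 0, IsM_one x, Tn_zero i, by ring⟩

lemma Tn_mulL (r : R) : ∀ i, ∀ {t : R}, Tn (p := p) x i t → Tn (p := p) x i (r * t)
  | 0, _, _ => trivial
  | (i+1), t, ⟨w, t', hM, hT, heq⟩ =>
      ⟨w, r * t', hM, Tn_mulL r i hT, by rw [show w * (r * t) = r * (w * t) by ring, heq]; ring⟩

lemma Tn_add : ∀ i, ∀ {a b : R}, Tn (p := p) x i a → Tn (p := p) x i b → Tn (p := p) x i (a + b)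
  | 0, _, _, _, _ => trivial
  | (i+1), a, b, ⟨w₁, t₁, hM₁, hT₁, he₁⟩, ⟨w₂, t₂, hM₂, hT₂, he₂⟩ =>
      ⟨w₁ * w₂, w₂ * t₁ + w₁ * t₂, IsM_mul x hM₁ hM₂,
        Tn_add i (Tn_mulL x w₂ i hT₁) (Tn_mulL x w₁ i hT₂), by
          have : w₁ * w₂ * (a + b) = w₂ * (w₁ * a) + w₁ * (w₂ * b) := by ring
          rw [this, he₁, he₂]; ring⟩

lemma Tn_neg (i : ℕ) {a : R} (h : Tn (p := p) x i a) : Tn (p := p) x i (-a) := by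
  have := Tn_mulL x (-1) i h
  simpa using this

lemma Tn_sub (i : ℕ) {a b : R} (ha : Tn (p := p) x i a) (hb : Tn (p := p) x i b) :
    Tn (p := p) x i (a - b) := by
  have := Tn_add x i ha (Tn_neg x i hb)
  simpa [sub_eq_add_neg] using this

lemma Tn_mono : ∀ i, ∀ {a : R}, Tn (p := p) x (i+1) a → Tn (p := p) x i a
  | 0, _, _ => trivial
  | (i+1), a, ⟨w, t, hM, hT, heq⟩ => ⟨w, t, hM, Tn_mono i hT, heq⟩

lemma Tn_le {i j : ℕ} (hij : i ≤ j) {a : R} (h : Tn (p := p) x j a) : Tn (p := p) x i a := by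
  induction j with
  | zero => have : i = 0 := by omega
            subst this; exact h
  | succ j ih =>
      rcases Nat.eq_or_lt_of_le hij with h1 | h1
      · subst h1; exact h
      · exact ih (by omega) (Tn_mono x j h)

lemma Tn_p_mul (i : ℕ) {t : R} (h : Tn (p := p) x i t) : Tn (p := p) x (i+1) ((p : R) * t) :=
  ⟨1, t, IsM_one x, h, by ring⟩

lemma Tn_p_mem (i : ℕ) (r : R) : Tn (p := p) x 1 ((p : R) * r) :=
  ⟨1, r, IsM_one x, trivial, by ring⟩

lemma Tn_sat {w : R} (hw : IsM (p := p) x w) : ∀ i, ∀ {a : R}, Tn (p := p) x i (w * a) → Tn (p := p) x i a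
  | 0, _, _ => trivial
  | (i+1), a, ⟨w', t, hM, hT, heq⟩ =>
      ⟨w' * w, t, IsM_mul x hM hw, hT, by
        have : w' * w * a = w' * (w * a) := by ring
        rw [this, heq]⟩

lemma Tn_sum {ι : Type*} (i : ℕ) (s : Finset ι) (f : ι → R)
    (h : ∀ j ∈ s, Tn (p := p) x i (f j)) : Tn (p := p) x i (∑ j ∈ s, f j) := by
  classical
  induction s using Finset.induction_on with
  | empty => simpa using Tn_zero x i
  | insert _ _ hni ih =>
      rename_i a s
      rw [Finset.sum_insert hni]
      exact Tn_add x i (h a (Finset.mem_insert_self a s)) (ih (fun j hj => h j (Finset.mem_insert_of_mem hj)))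

lemma Tn_pow_p : ∀ m : ℕ, Tn (p := p) x m ((p : R) ^ m)
  | 0 => trivial
  | (m+1) => by
      rw [pow_succ']
      exact Tn_p_mul x m (Tn_pow_p m)

end TnDef

section Delta
variable (x : R)

lemma pow_add_pmul (A B : R) : ∀ N : ℕ, ∃ J : R, (A + (p:R)*B)^N = A^N + (p:R)*J
  | 0 => ⟨0, by simp⟩
  | (N+1) => by
      obtain ⟨J, hJ⟩ := pow_add_pmul A B N
      exact ⟨B * A^N + A * J + (p:R) * (B * J), by rw [pow_succ, hJ, pow_succ]; ring⟩

lemma IsM_phi {w : R} (h : IsM (p := p) x w) : IsM (p := p) x (phi dr w) := by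
  obtain ⟨N, c, rfl⟩ := h
  have h1 : phi dr (x ^ N + (p:R) * c)
      = (x ^ p + (p:R) * dr.δ x) ^ N + (p:R) * (phi dr c) := by
    have hp' : ((p:R)) = (((p:ℕ)) : R) := by norm_num
    rw [map_add, map_mul, map_pow, phi_def]
    rw [hp', map_natCast]
  obtain ⟨J, hJ⟩ := pow_add_pmul (p := p) (x ^ p) (dr.δ x) N
  refine ⟨p * N, J + phi dr c, ?_⟩
  rw [h1, hJ, ← pow_mul]
  ring

/-- key: δ maps Tn (i+1) into Tn i -/
lemma Tn_delta : ∀ i : ℕ, ∀ {a : R}, Tn (p := p) x (i+1) a → Tn (p := p) x i (dr.δ a)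
  | 0, _, _ => trivial
  | (i+1), a, ⟨w, t, hM, hT, heq⟩ => by
      have h2 : 1 ≤ p := (Fact.out : p.Prime).pos
      have key : phi dr w * dr.δ a
          = (p : R) * dr.δ t + t ^ p * dr.δ ((p:ℕ) : R) - a ^ p * dr.δ w := by
        have hδ := congrArg dr.δ heq
        rw [delta_mul', show ((p:R) * t) = (((p:ℕ):R) * t) by norm_num,
          delta_mul', map_natCast] at hδ
        have : ((p:ℕ):R) = (p : R) := by norm_num
        rw [this] at hδ
        linear_combination hδ
      have m1 : Tn (p := p) x (i+1) ((p : R) * dr.δ t) :=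
        Tn_p_mul x i (Tn_delta i hT)
      have m2 : Tn (p := p) x (i+1) (t ^ p * dr.δ ((p:ℕ) : R)) := by
        have hpow : t ^ (p-1) * t = t ^ p := by
          rw [← pow_succ, show (p-1)+1 = p by omega]
        have : t ^ p * dr.δ ((p:ℕ) : R) = (t ^ (p-1) * dr.δ ((p:ℕ) : R)) * t := by
          rw [← hpow]; ring
        rw [this]
        exact Tn_mulL x _ _ hT
      have m3 : Tn (p := p) x (i+1) (a ^ p * dr.δ w) := by
        have ha : Tn (p := p) x (i+1) a := Tn_mono x _ ⟨w, t, hM, hT, heq⟩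
        have hpow : a ^ (p-1) * a = a ^ p := by
          rw [← pow_succ, show (p-1)+1 = p by omega]
        have : a ^ p * dr.δ w = (a ^ (p-1) * dr.δ w) * a := by
          rw [← hpow]; ring
        rw [this]
        exact Tn_mulL x _ _ ha
      have : Tn (p := p) x (i+1) (phi dr w * dr.δ a) := by
        rw [key]
        exact Tn_sub x _ (Tn_add x _ m1 m2) m3
      exact Tn_sat x (IsM_phi dr x hM) _ this

end Delta

section Chains
variable (x y : R) (k : ℕ)

lemma Tn_y (hk : 1 ≤ k) (hxy : x * y = (p : R) ^ k) : Tn (p := p) x k y := by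
  have hk' : k = (k - 1) + 1 := by omega
  rw [hk']
  refine ⟨x, (p:R) ^ (k-1), ⟨1, 0, by simp⟩, Tn_pow_p x (k-1), ?_⟩
  rw [hxy, hk', pow_succ']
  simp

lemma D_chain (hk : 1 ≤ k) (hxy : x * y = (p : R) ^ k) :
    ∀ j : ℕ, j ≤ k → Tn (p := p) x (k - j) ((dr.δ)^[j] y) := by
  intro j
  induction j with
  | zero =>
      intro _
      simpa using Tn_y x y k hk hxy
  | succ j ih =>
      intro hj
      have h1 : Tn (p := p) x (k - j) ((dr.δ)^[j] y) := ih (by omega)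
      have h2 : k - j = (k - (j+1)) + 1 := by omega
      rw [h2] at h1
      rw [Function.iterate_succ_apply']
      exact Tn_delta dr x _ h1

lemma phi_iter_x : ∀ j : ℕ, ∃ (N : ℕ) (c : R), 1 ≤ N ∧ (phi dr)^[j] x = x ^ N + (p : R) * c := by
  intro j
  induction j with
  | zero => exact ⟨1, 0, le_rfl, by simp⟩
  | succ j ih =>
      obtain ⟨N, c, hN, hphi⟩ := ih
      obtain ⟨J, hJ⟩ := pow_add_pmul (p := p) (x ^ p) (dr.δ x) N
      refine ⟨p * N, J + phi dr c, by nlinarith [(Fact.out : p.Prime).two_le], ?_⟩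
      rw [Function.iterate_succ_apply', hphi, map_add, map_mul, map_pow, phi_def,
        show ((p:R)) = (((p:ℕ)):R) by norm_num, map_natCast, hJ, ← pow_mul]
      push_cast
      ring

lemma E_chain (hk : 1 ≤ k) (hxy : x * y = (p : R) ^ k) :
    ∀ j : ℕ, j ≤ k → ∃ t : R, Tn (p := p) x (k - j + 1) t ∧
      (dr.δ)^[j] (x * y) = (phi dr)^[j] x * (dr.δ)^[j] y + t := by
  intro j
  induction j with
  | zero =>
      intro _
      exact ⟨0, Tn_zero x _, by simp⟩
  | succ j ih =>
      intro hj
      obtain ⟨t, hTt, het⟩ := ih (by omega)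
      set A := (phi dr)^[j] x * (dr.δ)^[j] y with hA
      have hDj : Tn (p := p) x (k - j) ((dr.δ)^[j] y) := D_chain dr x y k hk hxy j (by omega)
      have hidx : k - j = (k - (j+1)) + 1 := by omega
      -- expand δ (A + t)
      have hexp : (dr.δ)^[j+1] (x * y)
          = (phi dr)^[j+1] x * (dr.δ)^[j+1] y +
            (((dr.δ)^[j] y) ^ p * dr.δ ((phi dr)^[j] x) + dr.δ t -
              ∑ i ∈ Finset.Ioo 0 p, ((p.choose i / p : ℕ) : R) * A ^ i * t ^ (p - i)) := by
        rw [Function.iterate_succ_apply', het, dr.delta_add, hA, delta_mul',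
          Function.iterate_succ_apply', Function.iterate_succ_apply']
        ring
      refine ⟨_, ?_, hexp⟩
      have hm1 : Tn (p := p) x (k - (j+1) + 1) (((dr.δ)^[j] y) ^ p * dr.δ ((phi dr)^[j] x)) := by
        rw [← hidx]
        have hp1 : 1 ≤ p := (Fact.out : p.Prime).pos
        have hpow : ((dr.δ)^[j] y) ^ (p-1) * ((dr.δ)^[j] y) = ((dr.δ)^[j] y) ^ p := by
          rw [← pow_succ, show (p-1)+1 = p by omega]
        have heq2 : ((dr.δ)^[j] y) ^ p * dr.δ ((phi dr)^[j] x)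
            = (((dr.δ)^[j] y) ^ (p-1) * dr.δ ((phi dr)^[j] x)) * ((dr.δ)^[j] y) := by
          rw [← hpow]; ring
        rw [heq2]
        exact Tn_mulL x _ _ hDj
      have hm2 : Tn (p := p) x (k - (j+1) + 1) (dr.δ t) := by
        have : Tn (p := p) x ((k - (j+1) + 1) + 1) t := by
          have h3 : k - j + 1 = (k - (j+1) + 1) + 1 := by omega
          rw [← h3]; exact hTt
        exact Tn_delta dr x _ this
      have hm3 : Tn (p := p) x (k - (j+1) + 1)
          (∑ i ∈ Finset.Ioo 0 p, ((p.choose i / p : ℕ) : R) * A ^ i * t ^ (p - i)) := by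
        apply Tn_sum
        intro i hi
        simp only [Finset.mem_Ioo] at hi
        have hpi : 1 ≤ p - i := by omega
        have hpow : t ^ (p - i - 1) * t = t ^ (p - i) := by
          rw [← pow_succ, show (p-i-1)+1 = p-i by omega]
        have heq3 : ((p.choose i / p : ℕ) : R) * A ^ i * t ^ (p - i)
            = (((p.choose i / p : ℕ) : R) * A ^ i * t ^ (p - i - 1)) * t := by
          rw [← hpow]; ring
        rw [heq3]
        apply Tn_mulL
        have h4 : k - (j+1) + 1 ≤ k - j + 1 := by omega
        exact Tn_le x h4 hTt
      exact Tn_sub x _ (Tn_add x _ hm1 hm2) hm3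

include dr in
theorem key_lemma (hk : 1 ≤ k) (hxy : x * y = (p : R) ^ k)
    (hc : IsAdicComplete (Ideal.span {(p : R), x}) R) :
    ∃ (N : ℕ) (r : R), x ^ N = (p : R) * r := by
  obtain ⟨v, hv, hev⟩ := v_chain dr x y k hk hxy hc k le_rfl
  obtain ⟨t, hTt, het⟩ := E_chain dr x y k hk hxy k le_rfl
  obtain ⟨N, c, hN, hphik⟩ := phi_iter_x dr x k
  have hvt : v = (phi dr)^[k] x * (dr.δ)^[k] y + t := by
    rw [← het, hev]
    simp
  -- t is a unit
  have hmem : -((phi dr)^[k] x * (dr.δ)^[k] y) ∈ Ideal.span {(p : R), x} := by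
    apply neg_mem
    rw [hphik]
    have hx : x ∈ Ideal.span {(p : R), x} := Ideal.subset_span (Set.mem_insert_of_mem _ rfl)
    have hp : (p : R) ∈ Ideal.span {(p : R), x} := Ideal.subset_span (Set.mem_insert _ _)
    have : (x ^ N + (p:R) * c) * (dr.δ)^[k] y
        = (x ^ (N-1) * (dr.δ)^[k] y) * x + ((p:R) * (c * (dr.δ)^[k] y)) := by
      have hpow : x ^ (N-1) * x = x ^ N := by
        rw [← pow_succ, show (N-1)+1 = N by omega]
      rw [← hpow]; ring
    rw [this]
    exact add_mem (Ideal.mul_mem_left _ _ hx) (Ideal.mul_mem_right _ _ hp)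
  have hut : IsUnit t := by
    have : t = v + -((phi dr)^[k] x * (dr.δ)^[k] y) := by rw [hvt]; ring
    rw [this]
    exact isUnit_add_mem hc hv hmem
  -- extract
  have ht1 : Tn (p := p) x 1 t := by
    have : Tn (p := p) x (k - k + 1) t := hTt
    simpa using this
  obtain ⟨w, t₀, ⟨N₂, c₂, rfl⟩, -, heq⟩ := ht1
  obtain ⟨U, hU⟩ := hut
  refine ⟨N₂, (t₀ - c₂ * t) * (↑U⁻¹ : R), ?_⟩
  have hxN : x ^ N₂ * t = (p:R) * (t₀ - c₂ * t) := by
    have : (x ^ N₂ + (p:R) * c₂) * t = (p:R) * t₀ := heq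
    linear_combination this
  calc x ^ N₂ = x ^ N₂ * (t * (↑U⁻¹ : R)) := by
        rw [← hU, U.mul_inv]
        ring
    _ = ((p:R) * (t₀ - c₂ * t)) * (↑U⁻¹ : R) := by rw [← mul_assoc, hxN]
    _ = (p:R) * ((t₀ - c₂ * t) * (↑U⁻¹ : R)) := by ring

end Chains

end Stmt6Aux

/-- If `R` is a `(p,x)`-adically complete δ-ring and `x * y = p^k` with `k ≥ 1`,
then `x` is `p`-adically nilpotent: the `p`-adic completion of `R[1/x]` is the
zero ring. -/
theorem stmt6 {p : ℕ} [Fact p.Prime] {R : Type*} [CommRing R] (dr : DeltaRing p R)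
    (x y : R) (k : ℕ) (hk : 1 ≤ k) (hxy : x * y = (p : R) ^ k)
    (hc : IsAdicComplete (Ideal.span {(p : R), x}) R) :
    Subsingleton
      (AdicCompletion (Ideal.span {(p : Localization.Away x)}) (Localization.Away x)) := by
  obtain ⟨N, r, hNr⟩ := Stmt6Aux.key_lemma dr x y k hk hxy hc
  set L := Localization.Away x
  have hxunit : IsUnit (algebraMap R L x) :=
    IsLocalization.map_units L (⟨x, Submonoid.mem_powers x⟩ : Submonoid.powers x)
  have hpunit : IsUnit ((p : ℕ) : L) := by
    have h1 : (algebraMap R L x) ^ N = algebraMap R L ((p : R) * r) := by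
      rw [← map_pow, hNr]
    have h2 : IsUnit (algebraMap R L ((p : R) * r)) := by
      rw [← h1]; exact hxunit.pow N
    rw [map_mul] at h2
    have h3 : IsUnit (algebraMap R L ((p : R))) := isUnit_of_mul_isUnit_left h2
    rwa [map_natCast] at h3
  have htop : Ideal.span {((p : ℕ) : L)} = ⊤ := Ideal.span_singleton_eq_top.mpr hpunit
  have hsub : ∀ n : ℕ, Subsingleton
      (L ⧸ ((Ideal.span {((p : ℕ) : L)}) ^ n • ⊤ : Submodule L L)) := by
    intro n
    rw [Submodule.Quotient.subsingleton_iff, htop, Ideal.top_pow]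
    exact Submodule.top_smul ⊤
  constructor
  intro a b
  apply Subtype.ext
  funext n
  exact (hsub n).elim _ _
end

section
/- The element p^k is weakly k-distinguished in any p-complete δ-ring R: the ideal (p^k, δ(p^k), …, δ^k(p^k)) is the unit ideal. -/
variable {p : ℕ} [Fact p.Prime]

private def dd (p : ℕ) (z : ℤ) : ℤ := (z - z ^ p) / p

private lemma dd_dvd (z : ℤ) : (p : ℤ) ∣ z - z ^ p := by
  have : ((z - z ^ p : ℤ) : ZMod p) = 0 := by push_cast [ZMod.pow_card]; ring
  exact_mod_cast (ZMod.intCast_zmod_eq_zero_iff_dvd _ p).mp this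

private lemma p_mul_dd (z : ℤ) : (p : ℤ) * dd p z = z - z ^ p :=
  Int.mul_ediv_cancel' (dd_dvd z)

private lemma hp_pos : 0 < p := (Fact.out : p.Prime).pos

private lemma p_mul_choose (i : ℕ) (hi : i ∈ Finset.Ioo 0 p) :
    (p : ℤ) * ((p.choose i / p : ℕ) : ℤ) = (p.choose i : ℤ) := by
  simp only [Finset.mem_Ioo] at hi
  have h : p ∣ p.choose i := (Fact.out : p.Prime).dvd_choose_self (by omega) hi.2
  exact_mod_cast congrArg (Nat.cast : ℕ → ℤ) (Nat.mul_div_cancel' h)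

private lemma dd_step (z : ℤ) :
    dd p (z + 1) = dd p z - ∑ i ∈ Finset.Ioo 0 p, ((p.choose i / p : ℕ) : ℤ) * z ^ i := by
  have hp : (p : ℤ) ≠ 0 := by exact_mod_cast hp_pos.ne'
  apply mul_left_cancel₀ hp
  rw [p_mul_dd, mul_sub, p_mul_dd, Finset.mul_sum]
  have hsum : ∑ i ∈ Finset.Ioo 0 p, (p:ℤ) * (((p.choose i / p : ℕ) : ℤ) * z ^ i)
      = ∑ i ∈ Finset.Ioo 0 p, (p.choose i : ℤ) * z ^ i := by
    refine Finset.sum_congr rfl fun i hi => ?_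
    rw [← mul_assoc, p_mul_choose i hi]
  rw [hsum]
  have hb : (z + 1) ^ p = ∑ i ∈ Finset.range (p + 1), z ^ i * (p.choose i : ℤ) := by
    rw [add_pow]; simp
  rw [hb, Finset.sum_range_succ]
  have : ∑ i ∈ Finset.range p, z ^ i * (p.choose i : ℤ)
      = 1 + ∑ i ∈ Finset.Ioo 0 p, (p.choose i : ℤ) * z ^ i := by
    rw [Finset.range_eq_Ico, Finset.sum_eq_sum_Ico_succ_bot hp_pos]
    simp [mul_comm, Finset.Ioo]
    rfl
  rw [this]
  simp
  ring

section
variable {R : Type*} [CommRing R]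

private lemma delta_zero (dr : DeltaRing p R) : dr.δ 0 = 0 := by
  have h := dr.delta_add 0 0
  have hs : ∑ i ∈ Finset.Ioo 0 p, ((p.choose i / p : ℕ) : R) * (0:R) ^ i * (0:R) ^ (p - i) = 0 := by
    refine Finset.sum_eq_zero fun i hi => ?_
    simp only [Finset.mem_Ioo] at hi
    rw [zero_pow (by omega)]; ring
  rw [add_zero, hs, sub_zero] at h
  linear_combination -h

private lemma delta_intCast (dr : DeltaRing p R) : ∀ z : ℤ, dr.δ ((z : ℤ) : R) = ((dd p z : ℤ) : R) := by
  have key : ∀ z : ℤ, dr.δ (((z+1 : ℤ) : R)) = dr.δ ((z:ℤ):R) -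
      ∑ i ∈ Finset.Ioo 0 p, ((p.choose i / p : ℕ) : R) * ((z:ℤ):R) ^ i := by
    intro z
    have h := dr.delta_add ((z:ℤ):R) 1
    push_cast at h ⊢
    rw [h, dr.delta_one, add_zero]
    congr 1
    refine Finset.sum_congr rfl fun i hi => by rw [one_pow, mul_one]
  intro z
  induction z using Int.induction_on with
  | zero => simp [delta_zero dr, dd, hp_pos.ne']
  | succ n ih =>
      rw [key, ih, dd_step]
      simp only [Int.cast_sub, Int.cast_sum, Int.cast_mul, Int.cast_pow, Int.cast_natCast]
  | pred n ih =>
      have h := key (-(n:ℤ) - 1)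
      have hd := dd_step (p := p) (-(n:ℤ) - 1)
      rw [show (-(n:ℤ) - 1 + 1) = -(n:ℤ) by ring] at h hd
      rw [ih] at h
      have : dr.δ (((-(n:ℤ) - 1 : ℤ)) : R) = ((dd p (-(n:ℤ)) : ℤ) : R) +
          ∑ i ∈ Finset.Ioo 0 p, ((p.choose i / p : ℕ) : R) * (((-(n:ℤ)-1 : ℤ)):R) ^ i := by
        linear_combination -h
      rw [show (-(n:ℤ) - 1) = (-(n:ℤ) - 1) from rfl, this, hd]
      simp only [Int.cast_add, Int.cast_sub, Int.cast_sum, Int.cast_mul, Int.cast_pow,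
        Int.cast_natCast]
      ring

private lemma delta_iterate (dr : DeltaRing p R) (j : ℕ) (z : ℤ) :
    dr.δ^[j] ((z : ℤ) : R) = ((dd p)^[j] z : R) := by
  induction j generalizing z with
  | zero => rfl
  | succ j ih => rw [Function.iterate_succ_apply, Function.iterate_succ_apply,
      delta_intCast dr, ih]

end

private lemma dd_pow_mul (m : ℕ) (hm : 1 ≤ m) (u : ℤ) :
    dd p ((p : ℤ) ^ m * u) = (p : ℤ) ^ (m - 1) * (u - (p:ℤ) ^ (m * p - m) * u ^ p) := by
  have hp : (p : ℤ) ≠ 0 := by exact_mod_cast hp_pos.ne'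
  apply mul_left_cancel₀ hp
  rw [p_mul_dd]
  have h1 : (p:ℤ) * (p:ℤ) ^ (m-1) = (p:ℤ) ^ m := by
    rw [← pow_succ']; congr 1; omega
  have h2 : (p:ℤ)^m * (p:ℤ)^(m*p - m) = (p:ℤ)^(m*p) := by
    rw [← pow_add]; congr 1
    have : m ≤ m * p := Nat.le_mul_of_pos_right m (hp_pos (p := p))
    omega
  rw [← mul_assoc, h1, mul_pow, ← pow_mul]
  rw [mul_sub, ← mul_assoc, h2]

private lemma dd_iter_val (k : ℕ) : ∀ j ≤ k, ∃ u t : ℤ,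
    (dd p)^[j] ((p:ℤ)^k) = (p:ℤ)^(k-j) * u ∧ u = 1 + p * t := by
  intro j
  induction j with
  | zero => intro _; exact ⟨1, 0, by simp, by ring⟩
  | succ j ih =>
      intro hj
      obtain ⟨u, t, h1, h2⟩ := ih (by omega)
      have hkj : 1 ≤ k - j := by omega
      refine ⟨u - (p:ℤ)^((k-j)*p - (k-j)) * u ^ p,
        t - (p:ℤ)^((k-j)*p - (k-j) - 1) * u ^ p, ?_, ?_⟩
      · rw [Function.iterate_succ_apply', h1, dd_pow_mul _ hkj,
          show k - j - 1 = k - (j+1) from by omega]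
      · have he : 1 ≤ (k-j)*p - (k-j) := by
          have hp2 : 2 ≤ p := (Fact.out : p.Prime).two_le
          have : 2 * (k - j) ≤ (k-j) * p := by nlinarith
          omega
        have : (p:ℤ)^((k-j)*p - (k-j)) = p * (p:ℤ)^((k-j)*p - (k-j) - 1) := by
          rw [← pow_succ']; congr 1; omega
        rw [h2, this]; ring

/-- In any `p`-complete δ-ring, the element `p^k` is weakly `k`-distinguished:
the ideal `(p^k, δ(p^k), …, δ^k(p^k))` is the unit ideal. -/
theorem stmt7 {p : ℕ} [Fact p.Prime] {R : Type*} [CommRing R] (dr : DeltaRing p R)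
    (hc : IsAdicComplete (Ideal.span {(p : R)}) R) (k : ℕ) :
    Ideal.span ((fun j => dr.δ^[j] ((p : R) ^ k)) '' Set.Iic k) = ⊤ := by
  obtain ⟨u, t, h1, h2⟩ := dd_iter_val (p := p) k k le_rfl
  have hmem : dr.δ^[k] ((p:R)^k) ∈
      Ideal.span ((fun j => dr.δ^[j] ((p : R) ^ k)) '' Set.Iic k) :=
    Ideal.subset_span ⟨k, Set.mem_Iic.mpr le_rfl, rfl⟩
  have hval : dr.δ^[k] ((p:R)^k) = 1 + (p:R) * (t:R) := by
    have hcast : ((p:R)^k) = (((p:ℤ)^k : ℤ) : R) := by push_cast; ring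
    rw [hcast, delta_iterate dr k, h1, Nat.sub_self, h2]
    push_cast; ring
  have hx : (p:R) * t ∈ Ideal.span {(p:R)} :=
    Ideal.mul_mem_right _ _ (Ideal.mem_span_singleton_self _)
  have hu : IsUnit (1 + (p:R)*(t:R)) := by
    have := (Ideal.mem_jacobson_bot.mp (IsAdicComplete.le_jacobson_bot _ hx)) 1
    simpa [add_comm] using this
  exact Ideal.eq_top_of_isUnit_mem _ hmem (hval ▸ hu)
end

section
/- Let M be an abelian group annihilated by a power of p, with an automorphism σ such that every element is fixed by σ^{p^N} for some N. Then the colimit over N of the coinvariants/first group cohomology H^1(⟨σ^{p^N}⟩, M) = M/(σ^{p^N}-1)M, with transition maps induced by the norm maps, is zero; equivalently, in the colimit system where the bonding maps eventually become multiplication by p, the colimit vanishes. -/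
private lemma fix_pow {M : Type*} [AddCommGroup M] (σ : AddAut M) (m : M)
    (h : σ m = m) : ∀ k : ℕ, (k • σ) m = m := by
  intro k
  induction k with
  | zero => simp
  | succ k ih => rw [succ_nsmul, AddAut.add_apply, h, ih]

/-- Let `M` be an abelian group annihilated by a power of `p`, with an
automorphism `σ` such that every element is fixed by `σ^{p^N}` for some `N`.
Then the colimit over `N` of `H^1(⟨σ^{p^N}⟩, M) = M/(σ^{p^N}-1)M`, with the
norm transition maps `x ↦ ∑_{j < p^{N'-N}} σ^{j p^N} x`, vanishes: every class
becomes trivial at some later stage. -/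
theorem stmt14 (p : ℕ) [Fact p.Prime] (M : Type*) [AddCommGroup M]
    (r : ℕ) (htor : ∀ m : M, p ^ r • m = 0)
    (σ : AddAut M) (hcont : ∀ m : M, ∃ N : ℕ, ((p ^ N) • σ) m = m) :
    ∀ N : ℕ, ∀ m : M, ∃ N', N ≤ N' ∧
      ∃ z : M, (∑ j ∈ Finset.range (p ^ (N' - N)), ((j * p ^ N) • σ) m)
        = ((p ^ N') • σ) z - z := by
  intro N m
  obtain ⟨N₁, h₁⟩ := hcont m
  set N₀ := max N N₁ with hN₀
  have hfix : ((p ^ N₀) • σ) m = m := by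
    have hsplit : p ^ N₀ = p ^ N₁ * p ^ (N₀ - N₁) := by
      rw [← pow_add]; congr 1; omega
    rw [hsplit, mul_nsmul]
    exact fix_pow _ _ h₁ _
  set c := p ^ (N₀ - N) with hc
  set f : ℕ → M := fun j => ((j * p ^ N) • σ) m with hf
  have hper : Function.Periodic f c := by
    intro j
    have : (j + c) * p ^ N = j * p ^ N + p ^ N₀ := by
      rw [add_mul, hc, ← pow_add]
      congr 2
      omega
    simp only [hf, this, add_nsmul, AddAut.add_apply, hfix]
  have key : ∀ k : ℕ, ∑ j ∈ Finset.range (k * c), f j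
      = k • ∑ j ∈ Finset.range c, f j := by
    intro k
    induction k with
    | zero => simp
    | succ k ih =>
      rw [add_mul, one_mul, Finset.sum_range_add, ih, succ_nsmul]
      congr 1
      refine Finset.sum_congr rfl fun j _ => ?_
      have := (hper.nat_mul k) j
      rwa [add_comm] at this
  refine ⟨N₀ + r, by omega, 0, ?_⟩
  have hexp : p ^ (N₀ + r - N) = p ^ r * c := by
    rw [hc, ← pow_add]; congr 1; omega
  rw [hexp]
  have := key (p ^ r)
  simp only [hf] at this
  rw [this, htor]
  simp
end
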